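/- For all a, b > 0 with a ≠ b, (2N₃(a,b) + 3L(a,b))/5 ≤ (5A(a,b) + 7L(a,b))/12, equivalently L(a,b) ≤ 25A(a,b) - 24N₃(a,b). -/

import Mathlib

lemma key_log (t : ℝ) (ht : 1 ≤ t) : 2 * (t - 1) ≤ (t + 1) * Real.log t := by
  set f : ℝ → ℝ := fun x => (x + 1) * Real.log x - 2 * (x - 1) with hf
  have hderiv : ∀ x ∈ Set.Ioi (1:ℝ), HasDerivAt f (Real.log x + (x + 1) / x - 2) x := by
    intro x hx
    have hx0 : (0:ℝ) < x := lt_trans one_pos hx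
    have h1 : HasDerivAt (fun x : ℝ => (x + 1) * Real.log x)
        (1 * Real.log x + (x + 1) * x⁻¹) x := by
      exact ((hasDerivAt_id x).add_const 1).mul (Real.hasDerivAt_log hx0.ne')
    have h2 : HasDerivAt (fun x : ℝ => 2 * (x - 1)) 2 x := by
      simpa using ((hasDerivAt_id x).sub_const 1).const_mul 2
    have := h1.sub h2
    refine this.congr_deriv ?_
    ring
  have hcont : ContinuousOn f (Set.Ici 1) := by
    apply ContinuousOn.sub
    · apply ContinuousOn.mul
      · fun_prop
      · apply Real.continuousOn_log.mono
        intro x hx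
        simp only [Set.mem_Ici] at hx
        simp only [Set.mem_compl_iff, Set.mem_singleton_iff]
        linarith
    · fun_prop
  have hmono : MonotoneOn f (Set.Ici 1) := by
    apply monotoneOn_of_deriv_nonneg (convex_Ici 1) hcont
    · intro x hx
      rw [interior_Ici] at hx
      exact (hderiv x hx).differentiableAt.differentiableWithinAt
    · intro x hx
      rw [interior_Ici] at hx
      rw [(hderiv x hx).deriv]
      have hx0 : (0:ℝ) < x := lt_trans one_pos hx
      have hlog : 1 - x⁻¹ ≤ Real.log x := Real.one_sub_inv_le_log_of_pos hx0
      have : (x + 1) / x = 1 + x⁻¹ := by field_simp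
      rw [this]
      linarith
  have h1 : f 1 ≤ f t := hmono (Set.mem_Ici.mpr le_rfl) (Set.mem_Ici.mpr ht) ht
  simp only [hf, Real.log_one] at h1
  linarith

lemma main_lt (a b : ℝ) (ha : 0 < a) (hab : a < b) :
    (2 * ((a + Real.sqrt (a * b) + b) / 3) + 3 * ((b - a) / (Real.log b - Real.log a))) / 5 ≤
      (5 * ((a + b) / 2) + 7 * ((b - a) / (Real.log b - Real.log a))) / 12 := by
  have hb : 0 < b := lt_trans ha hab
  have hlog : Real.log a < Real.log b := Real.log_lt_log ha hab
  have ht : 1 ≤ b / a := (one_le_div ha).mpr hab.le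
  have hkey := key_log (b / a) ht
  rw [Real.log_div hb.ne' ha.ne'] at hkey
  -- multiply hkey by a > 0 to clear denominators
  have hc : b / a * a = b := div_mul_cancel₀ b ha.ne'
  have hkey' : 2 * (b - a) ≤ (a + b) * (Real.log b - Real.log a) := by
    have h := mul_le_mul_of_nonneg_right hkey ha.le
    have e1 : 2 * (b / a - 1) * a = 2 * (b - a) := by linear_combination 2 * hc
    have e2 : (b / a + 1) * (Real.log b - Real.log a) * a
        = (a + b) * (Real.log b - Real.log a) := by
      linear_combination (Real.log b - Real.log a) * hc
    linarith [e1 ▸ e2 ▸ h]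
  have hL : (b - a) / (Real.log b - Real.log a) ≤ (a + b) / 2 := by
    rw [div_le_div_iff₀ (by linarith) (by norm_num)]
    linarith [hkey']
  have hG : Real.sqrt (a * b) ≤ (a + b) / 2 := by
    have h1 : Real.sqrt (a * b) ≤ Real.sqrt (((a + b) / 2) ^ 2) := by
      apply Real.sqrt_le_sqrt
      nlinarith [sq_nonneg (a - b)]
    rwa [Real.sqrt_sq (by linarith)] at h1
  linarith

theorem n3_log_combo (a b : ℝ) (ha : 0 < a) (hb : 0 < b) (hab : a ≠ b) :
    (2 * ((a + Real.sqrt (a * b) + b) / 3) + 3 * ((b - a) / (Real.log b - Real.log a))) / 5 ≤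
      (5 * ((a + b) / 2) + 7 * ((b - a) / (Real.log b - Real.log a))) / 12 := by
  rcases lt_or_gt_of_ne hab with h | h
  · exact main_lt a b ha h
  · have := main_lt b a hb h
    have e : (a - b) / (Real.log a - Real.log b) = (b - a) / (Real.log b - Real.log a) := by
      rw [show a - b = -(b - a) by ring,
        show Real.log a - Real.log b = -(Real.log b - Real.log a) by ring, neg_div_neg_eq]
    rw [mul_comm b a, e] at this
    linarith
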